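/- Let X and Y be nonnegative random variables on a common probability space, let δ > α > 0, set ε := (1+δ)/(1+α) − 1 > 0, and let β > 1. Assume E[X^{1+δ}] < ∞ and that there exists n₀ such that for all integers n ≥ n₀, P( Y ≥ 2 n^{1/(1+ε)} and X < n^{1/(1+δ)} ) ≤ n^{−β}. Then E[Y^{1+ε}] < ∞. -/

import Mathlib

open MeasureTheory
open scoped ENNReal

private lemma pt_upper (x : ℝ) :
    ENNReal.ofReal x ≤ ∑' n : ℕ, (if (n : ℝ) < x then (1 : ℝ≥0∞) else 0) := by
  calc ENNReal.ofReal x ≤ ((⌈x⌉₊ : ℕ) : ℝ≥0∞) := by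
        rw [← ENNReal.ofReal_natCast]
        exact ENNReal.ofReal_le_ofReal (Nat.le_ceil x)
    _ = ∑ n ∈ Finset.range ⌈x⌉₊, (if (n : ℝ) < x then (1 : ℝ≥0∞) else 0) := by
        rw [Finset.sum_ite_of_true]
        · simp
        · intro n hn
          exact Nat.lt_ceil.mp (Finset.mem_range.mp hn)
    _ ≤ _ := ENNReal.sum_le_tsum _

private lemma pt_lower (x : ℝ) :
    ∑' n : ℕ, (if (n : ℝ) + 1 ≤ x then (1 : ℝ≥0∞) else 0) ≤ ENNReal.ofReal x := by
  rcases le_or_gt 0 x with hx | hx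
  · have heq : ∑' n : ℕ, (if (n : ℝ) + 1 ≤ x then (1 : ℝ≥0∞) else 0)
        = ∑ n ∈ Finset.range ⌊x⌋₊, (if (n : ℝ) + 1 ≤ x then (1 : ℝ≥0∞) else 0) := by
      refine tsum_eq_sum ?_
      intro n hn
      have hn' : ⌊x⌋₊ ≤ n := le_of_not_gt (fun h => hn (Finset.mem_range.mpr h))
      rw [if_neg]
      have h1 := Nat.lt_floor_add_one x
      have h2 : (⌊x⌋₊ : ℝ) ≤ n := by exact_mod_cast hn'
      intro h; linarith
    rw [heq]
    calc ∑ n ∈ Finset.range ⌊x⌋₊, (if (n : ℝ) + 1 ≤ x then (1 : ℝ≥0∞) else 0)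
        ≤ ∑ _n ∈ Finset.range ⌊x⌋₊, (1 : ℝ≥0∞) := by
          refine Finset.sum_le_sum fun n _ => ?_
          split <;> simp
      _ = ((⌊x⌋₊ : ℕ) : ℝ≥0∞) := by simp
      _ ≤ ENNReal.ofReal x := by
          rw [← ENNReal.ofReal_natCast]
          exact ENNReal.ofReal_le_ofReal (Nat.floor_le hx)
  · have h0 : ∀ n : ℕ, (if (n : ℝ) + 1 ≤ x then (1 : ℝ≥0∞) else 0) = 0 := by
      intro n
      rw [if_neg]
      have : (0:ℝ) ≤ n := n.cast_nonneg
      intro h; linarith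
    simp [h0]


/-- Tail-splitting moment lemma: let `X, Y ≥ 0` be random variables,
`δ > α > 0`, `ε = (1+δ)/(1+α) - 1`, `β > 1`.  If `E[X^{1+δ}] < ∞` and for all large `n`
`P(Y ≥ 2 n^{1/(1+ε)} and X < n^{1/(1+δ)}) ≤ n^{-β}`, then `E[Y^{1+ε}] < ∞`. -/
theorem tail_splitting_moment
    {Ω : Type*} [MeasurableSpace Ω] (P : Measure Ω) [IsProbabilityMeasure P]
    (X Y : Ω → ℝ) (hXmeas : Measurable X) (hYmeas : Measurable Y)
    (hXnonneg : ∀ ω, 0 ≤ X ω) (hYnonneg : ∀ ω, 0 ≤ Y ω)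
    (δ α ε β : ℝ) (hα : 0 < α) (hδ : α < δ)
    (hε : ε = (1 + δ) / (1 + α) - 1) (hβ : 1 < β)
    (hXmom : (∫⁻ ω, ENNReal.ofReal (X ω ^ (1 + δ)) ∂P) < ⊤)
    (htail : ∃ n₀ : ℕ, ∀ n : ℕ, n₀ ≤ n →
      P {ω | 2 * (n : ℝ) ^ ((1 : ℝ) / (1 + ε)) ≤ Y ω ∧ X ω < (n : ℝ) ^ ((1 : ℝ) / (1 + δ))}
        ≤ ENNReal.ofReal ((n : ℝ) ^ (-β))) :
    (∫⁻ ω, ENNReal.ofReal (Y ω ^ (1 + ε)) ∂P) < ⊤ := by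
  obtain ⟨n₀, htail⟩ := htail
  have h1δ : (0:ℝ) < 1 + δ := by linarith
  have h1α : (0:ℝ) < 1 + α := by linarith
  have hεpos : 0 < ε := by
    rw [hε, sub_pos]
    exact (one_lt_div h1α).mpr (by linarith)
  have h1ε : (0:ℝ) < 1 + ε := by linarith
  set g : Ω → ℝ := fun ω => (Y ω / 2) ^ (1 + ε) with hgdef
  have hgmeas : Measurable g := (hYmeas.div_const 2).pow measurable_const
  -- factor out 2^(1+ε)
  have key : ∀ ω, ENNReal.ofReal (Y ω ^ (1 + ε))
      = ENNReal.ofReal ((2:ℝ) ^ (1 + ε)) * ENNReal.ofReal (g ω) := by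
    intro ω
    rw [← ENNReal.ofReal_mul (Real.rpow_nonneg (by norm_num) _)]
    congr 1
    rw [hgdef]
    rw [← Real.mul_rpow (by norm_num) (by linarith [hYnonneg ω])]
    congr 1
    field_simp
  simp_rw [key]
  rw [lintegral_const_mul' _ _ ENNReal.ofReal_ne_top]
  refine ENNReal.mul_lt_top ENNReal.ofReal_lt_top ?_
  -- tail sets
  set A : ℕ → Set Ω := fun n =>
    {ω | 2 * (n : ℝ) ^ ((1 : ℝ) / (1 + ε)) ≤ Y ω ∧ X ω < (n : ℝ) ^ ((1 : ℝ) / (1 + δ))} with hA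
  set B : ℕ → Set Ω := fun n => {ω | (n : ℝ) ^ ((1 : ℝ) / (1 + δ)) ≤ X ω} with hB
  set C : ℕ → Set Ω := fun n => {ω | (n : ℝ) ≤ X ω ^ (1 + δ)} with hC
  have hsub : ∀ n : ℕ, {ω | (n : ℝ) < g ω} ⊆ A n ∪ B n := by
    intro n ω hω
    have hYpos : 0 ≤ Y ω / 2 := by linarith [hYnonneg ω]
    have h1 : (n : ℝ) ^ ((1:ℝ) / (1 + ε)) < (g ω) ^ ((1:ℝ) / (1 + ε)) :=
      Real.rpow_lt_rpow n.cast_nonneg hω (by positivity)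
    have h2 : (g ω) ^ ((1:ℝ) / (1 + ε)) = Y ω / 2 := by
      show ((Y ω / 2) ^ (1 + ε)) ^ ((1:ℝ) / (1 + ε)) = Y ω / 2
      rw [← Real.rpow_mul hYpos, mul_one_div, div_self (ne_of_gt h1ε), Real.rpow_one]
    rw [h2] at h1
    by_cases hX : X ω < (n : ℝ) ^ ((1 : ℝ) / (1 + δ))
    · exact Or.inl ⟨by linarith, hX⟩
    · exact Or.inr (le_of_not_gt hX)
  have hBC : ∀ n : ℕ, B n ⊆ C n := by
    intro n ω hω
    have h1 : ((n : ℝ) ^ ((1:ℝ) / (1 + δ))) ^ (1 + δ) ≤ X ω ^ (1 + δ) :=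
      Real.rpow_le_rpow (Real.rpow_nonneg n.cast_nonneg _) hω (le_of_lt h1δ)
    rwa [← Real.rpow_mul n.cast_nonneg, one_div_mul_cancel (ne_of_gt h1δ), Real.rpow_one] at h1
  have hmeas : ∀ n : ℕ, MeasurableSet {ω | (n : ℝ) < g ω} :=
    fun n => measurableSet_lt measurable_const hgmeas
  have hmeasC : ∀ n : ℕ, MeasurableSet (C n) :=
    fun n => measurableSet_le measurable_const (hXmeas.pow measurable_const)
  -- step 1
  have interchange : ∑' n : ℕ, P {ω | (n : ℝ) < g ω}
      = ∫⁻ ω, ∑' n : ℕ, Set.indicator {ω | (n : ℝ) < g ω} (fun _ => (1:ℝ≥0∞)) ω ∂P := by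
    rw [lintegral_tsum (fun n => (measurable_const.indicator (hmeas n)).aemeasurable)]
    refine tsum_congr fun n => ?_
    rw [lintegral_indicator (hmeas n)]
    simp
  have step1 : (∫⁻ ω, ENNReal.ofReal (g ω) ∂P) ≤ ∑' n : ℕ, P {ω | (n : ℝ) < g ω} := by
    rw [interchange]
    refine lintegral_mono fun ω => ?_
    have := pt_upper (g ω)
    simpa [Set.indicator_apply] using this
  -- step 2
  have step2 : ∑' n : ℕ, P {ω | (n : ℝ) < g ω} ≤ (∑' n : ℕ, P (A n)) + ∑' n : ℕ, P (C n) := by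
    rw [← ENNReal.tsum_add]
    refine ENNReal.tsum_le_tsum fun n => ?_
    calc P {ω | (n : ℝ) < g ω} ≤ P (A n ∪ B n) := measure_mono (hsub n)
      _ ≤ P (A n) + P (B n) := measure_union_le _ _
      _ ≤ P (A n) + P (C n) := add_le_add_right (measure_mono (hBC n)) _
  -- part A
  have partA : (∑' n : ℕ, P (A n)) < ⊤ := by
    rw [← Summable.sum_add_tsum_nat_add' (f := fun n => P (A n)) (k := n₀) ENNReal.summable]
    refine ENNReal.add_lt_top.mpr ⟨?_, ?_⟩
    · exact ENNReal.sum_lt_top.mpr fun n _ => measure_lt_top P _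
    · have hsum : Summable (fun n : ℕ => ((n + n₀ : ℕ) : ℝ) ^ (-β)) := by
        have h' : Summable (fun n : ℕ => (n : ℝ) ^ (-β)) :=
          Real.summable_nat_rpow.mpr (by linarith)
        exact (_root_.summable_nat_add_iff n₀).mpr h'
      calc (∑' n : ℕ, P (A (n + n₀)))
          ≤ ∑' n : ℕ, ENNReal.ofReal (((n + n₀ : ℕ) : ℝ) ^ (-β)) :=
            ENNReal.tsum_le_tsum fun n => htail (n + n₀) (Nat.le_add_left _ _)
        _ = ENNReal.ofReal (∑' n : ℕ, ((n + n₀ : ℕ) : ℝ) ^ (-β)) :=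
            (ENNReal.ofReal_tsum_of_nonneg (fun n => Real.rpow_nonneg (Nat.cast_nonneg _) _) hsum).symm
        _ < ⊤ := ENNReal.ofReal_lt_top
  -- part C
  have partC : (∑' n : ℕ, P (C n)) < ⊤ := by
    rw [← Summable.sum_add_tsum_nat_add' (f := fun n => P (C n)) (k := 1) ENNReal.summable]
    refine ENNReal.add_lt_top.mpr ⟨?_, ?_⟩
    · exact ENNReal.sum_lt_top.mpr fun n _ => measure_lt_top P _
    refine lt_of_le_of_lt ?_ hXmom
    calc (∑' n : ℕ, P (C (n + 1)))
        = ∑' n : ℕ, ∫⁻ ω, Set.indicator (C (n + 1)) (fun _ => (1:ℝ≥0∞)) ω ∂P := by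
          refine tsum_congr fun n => ?_
          rw [lintegral_indicator (hmeasC (n + 1))]
          simp
      _ = ∫⁻ ω, ∑' n : ℕ, Set.indicator (C (n + 1)) (fun _ => (1:ℝ≥0∞)) ω ∂P :=
          (lintegral_tsum fun n => ((measurable_const.indicator (hmeasC (n + 1))).aemeasurable)).symm
      _ ≤ ∫⁻ ω, ENNReal.ofReal (X ω ^ (1 + δ)) ∂P := by
          refine lintegral_mono fun ω => ?_
          refine le_trans (le_of_eq ?_) (pt_lower (X ω ^ (1 + δ)))
          refine tsum_congr fun n => ?_
          simp only [Set.indicator_apply, hC, Set.mem_setOf_eq]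
          have hcast : ((n + 1 : ℕ) : ℝ) = (n : ℝ) + 1 := by push_cast; ring
          rw [hcast]
  exact lt_of_le_of_lt (le_trans step1 step2)
    (ENNReal.add_lt_top.mpr ⟨partA, partC⟩)
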